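/- Along any solution t ↦ (r(t), p(t)) of the Kepler equations dr/dt = p/m, dp/dt = −km r/‖r‖³, the function t ↦ (p(t)·r(t) − 2E(r(t),p(t)) t)/(mk) has derivative 1/‖r(t)‖. -/

import Mathlib

/-- Along any solution `t ↦ (r t, p t)` of the Kepler equations
`dr/dt = p/m`, `dp/dt = -km r/‖r‖³`, the function
`t ↦ (p(t)·r(t) - 2 E(r(t),p(t)) t)/(mk)` has derivative `1/‖r(t)‖`,
where `E(r,p) = ‖p‖²/(2m) - mk/‖r‖`. -/
theorem kepler_levi_civita_derivative
    (m k : ℝ) (hm : 0 < m) (hk : 0 < k)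
    (r p : ℝ → EuclideanSpace ℝ (Fin 3))
    (hr0 : ∀ t, r t ≠ 0)
    (hr : ∀ t, HasDerivAt r ((1 / m) • p t) t)
    (hp : ∀ t, HasDerivAt p (-(k * m / ‖r t‖ ^ 3) • r t) t) :
    ∀ t : ℝ, HasDerivAt
      (fun t => (inner ℝ (p t) (r t) -
        2 * (‖p t‖ ^ 2 / (2 * m) - m * k / ‖r t‖) * t) / (m * k) : ℝ → ℝ)
      (1 / ‖r t‖) t := by
  intro t
  have hrn : (0:ℝ) < ‖r t‖ := norm_pos_iff.2 (hr0 t)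
  have hrn' : ‖r t‖ ≠ 0 := ne_of_gt hrn
  -- derivative of the inner product ⟪p, r⟫
  have hA : HasDerivAt (fun t => (inner ℝ (p t) (r t) : ℝ))
      ((inner ℝ (p t) ((1 / m) • p t) : ℝ) +
        (inner ℝ (-(k * m / ‖r t‖ ^ 3) • r t) (r t) : ℝ)) t :=
    (hp t).inner ℝ (hr t)
  -- derivative of ‖p‖²
  have hB : HasDerivAt (fun t => ‖p t‖ ^ 2)
      (2 * (inner ℝ (p t) (-(k * m / ‖r t‖ ^ 3) • r t) : ℝ)) t :=
    (hp t).norm_sq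
  -- derivative of ‖r‖ via sqrt of ‖r‖²
  have hC : HasDerivAt (fun t => ‖r t‖)
      (1 / (2 * ‖r t‖) * (2 * (inner ℝ (r t) ((1 / m) • p t) : ℝ))) t := by
    have hsq : HasDerivAt (fun t => ‖r t‖ ^ 2)
        (2 * (inner ℝ (r t) ((1 / m) • p t) : ℝ)) t := (hr t).norm_sq
    have hsqrt : HasDerivAt Real.sqrt (1 / (2 * Real.sqrt (‖r t‖ ^ 2))) (‖r t‖ ^ 2) := by
      exact Real.hasDerivAt_sqrt (by positivity)
    have h := hsqrt.comp t hsq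
    simp only [Function.comp_def] at h
    simpa [Real.sqrt_sq, norm_nonneg] using h
  -- derivative of m*k/‖r‖
  have hD : HasDerivAt (fun t => m * k / ‖r t‖)
      (m * k * (-(1 / (2 * ‖r t‖) * (2 * (inner ℝ (r t) ((1 / m) • p t) : ℝ))) / ‖r t‖ ^ 2)) t := by
    simpa [div_eq_mul_inv] using ((hC.inv hrn').const_mul (m * k))
  -- full numerator
  have hE := (hB.div_const (2 * m)).sub hD
  have hN := hA.sub ((hE.const_mul 2).mul (hasDerivAt_id t))
  have := hN.div_const (m * k)
  refine this.congr_deriv ?_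
  -- now an algebraic identity between real numbers
  have hpr : (inner ℝ (r t) (p t) : ℝ) = (inner ℝ (p t) (r t) : ℝ) := real_inner_comm _ _
  have hpp : (inner ℝ (p t) (p t) : ℝ) = ‖p t‖ ^ 2 := real_inner_self_eq_norm_sq _
  have hrr : (inner ℝ (r t) (r t) : ℝ) = ‖r t‖ ^ 2 := real_inner_self_eq_norm_sq _
  simp only [inner_smul_left, inner_smul_right, RCLike.inner_apply, map_div₀, map_neg,
    map_mul, map_one, map_pow, conj_trivial, hpr, hpp, hrr, Pi.sub_apply]
  field_simp
  ring
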